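/- Let n and i be natural numbers with 2i ≤ n. For each j with 0 ≤ j ≤ i, let σ_j be the permutation of {0,1,…,n−1} that is the product of the j disjoint transpositions (2t, 2t+1) for t = 0,…,j−1. Then for every (not necessarily irreducible) finite-dimensional complex representation of the symmetric group S_n with character χ, there exists a natural number m such that Σ_{j=0}^{i} C(i,j) · χ(σ_j) = 2^i · m. (This extends the Chan–Lam lemma from irreducible characters to arbitrary characters, and is what the paper uses to conclude that α_i(γ) ≥ 0 for every Schur-positive symmetric function γ, in particular for the homogeneous symmetric functions h_λ and the elementary symmetric functions e_λ.) -/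

import Mathlib

open CategoryTheory

/-- The transposition `(2t, 2t+1)` of `{0, 1, …, n−1}` (the identity if `2t+1 ≥ n`). -/
def tau (n t : ℕ) : Equiv.Perm (Fin n) :=
  if h : 2 * t + 1 < n then Equiv.swap ⟨2 * t, by omega⟩ ⟨2 * t + 1, h⟩ else 1

/-- The permutation `σ_j = (0 1)(2 3)⋯(2j−2 2j−1)` of `{0, 1, …, n−1}`,
a product of `j` disjoint transpositions. -/
def sigma (n j : ℕ) : Equiv.Perm (Fin n) :=
  ((List.range j).map (tau n)).prod

lemma tau_sq (n t : ℕ) : tau n t * tau n t = 1 := by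
  unfold tau; split
  · exact Equiv.swap_mul_self _ _
  · simp

lemma tau_commute (n s t : ℕ) (h : s ≠ t) : Commute (tau n s) (tau n t) := by
  unfold tau
  split_ifs with h1 h2 h2
  · apply Equiv.Perm.Disjoint.commute
    intro x
    by_cases hx : (x : ℕ) = 2 * s ∨ (x : ℕ) = 2 * s + 1
    · right
      apply Equiv.swap_apply_of_ne_of_ne <;>
        · intro hc
          rw [Fin.ext_iff] at hc
          simp only [] at hc
          omega
    · left
      apply Equiv.swap_apply_of_ne_of_ne <;>
        · intro hc
          rw [Fin.ext_iff] at hc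
          simp only [] at hc
          omega
  · simp [Commute, SemiconjBy]
  · simp [Commute, SemiconjBy]
  · simp [Commute, SemiconjBy]

lemma sigma_succ (n a : ℕ) : sigma n (a + 1) = sigma n a * tau n a := by
  unfold sigma
  rw [List.range_succ, List.map_append, List.prod_append]
  simp

lemma sigma_tau_commute (n a b : ℕ) (hba : b ≤ a) : Commute (sigma n b) (tau n a) := by
  apply Commute.list_prod_left
  intro x hx
  rw [List.mem_map] at hx
  obtain ⟨t, ht, rfl⟩ := hx
  rw [List.mem_range] at ht
  exact tau_commute n t a (by omega)

/-- Swap block `b` (= `{2b, 2b+1}`) with block `a` (= `{2a, 2a+1}`). -/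
def blockSwap (n a b : ℕ) (ha : 2 * a + 1 < n) (hb : 2 * b + 1 < n) : Equiv.Perm (Fin n) :=
  Equiv.swap ⟨2 * b, Nat.lt_of_succ_lt hb⟩ ⟨2 * a, Nat.lt_of_succ_lt ha⟩ *
    Equiv.swap ⟨2 * b + 1, hb⟩ ⟨2 * a + 1, ha⟩

lemma blockSwap_conj_tau_self (n a b : ℕ) (ha : 2 * a + 1 < n) (hb : 2 * b + 1 < n) :
    blockSwap n a b ha hb * tau n a * (blockSwap n a b ha hb)⁻¹ = tau n b := by
  rw [tau, dif_pos ha, tau, dif_pos hb, ← Equiv.swap_apply_apply]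
  have h1 : blockSwap n a b ha hb ⟨2 * a, Nat.lt_of_succ_lt ha⟩ = ⟨2 * b, Nat.lt_of_succ_lt hb⟩ := by
    simp only [blockSwap, Equiv.Perm.mul_apply, Equiv.swap_apply_def, Fin.ext_iff,
      apply_ite (Fin.val)]
    split_ifs <;> omega
  have h2 : blockSwap n a b ha hb ⟨2 * a + 1, ha⟩ = ⟨2 * b + 1, hb⟩ := by
    simp only [blockSwap, Equiv.Perm.mul_apply, Equiv.swap_apply_def, Fin.ext_iff,
      apply_ite (Fin.val)]
    split_ifs <;> omega
  rw [h1, h2]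

lemma blockSwap_conj_tau_other (n a b t : ℕ) (ha : 2 * a + 1 < n) (hb : 2 * b + 1 < n)
    (hta : t ≠ a) (htb : t ≠ b) :
    blockSwap n a b ha hb * tau n t * (blockSwap n a b ha hb)⁻¹ = tau n t := by
  by_cases ht : 2 * t + 1 < n
  · rw [tau, dif_pos ht, ← Equiv.swap_apply_apply]
    have h1 : blockSwap n a b ha hb ⟨2 * t, Nat.lt_of_succ_lt ht⟩ = ⟨2 * t, Nat.lt_of_succ_lt ht⟩ := by
      simp only [blockSwap, Equiv.Perm.mul_apply, Equiv.swap_apply_def, Fin.ext_iff,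
        apply_ite (Fin.val)]
      split_ifs <;> omega
    have h2 : blockSwap n a b ha hb ⟨2 * t + 1, ht⟩ = ⟨2 * t + 1, ht⟩ := by
      simp only [blockSwap, Equiv.Perm.mul_apply, Equiv.swap_apply_def, Fin.ext_iff,
        apply_ite (Fin.val)]
      split_ifs <;> omega
    rw [h1, h2]
  · rw [tau, dif_neg ht]
    group

lemma conj_list_prod {G : Type*} [Group G] (g : G) (l : List G)
    (h : ∀ x ∈ l, g * x * g⁻¹ = x) : g * l.prod * g⁻¹ = l.prod := by
  induction l with
  | nil => simp
  | cons x xs ih =>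
    rw [List.prod_cons]
    have hx : g * (x * xs.prod) * g⁻¹ = (g * x * g⁻¹) * (g * xs.prod * g⁻¹) := by group
    rw [hx, h x (by simp), ih (fun y hy => h y (by simp [hy]))]

lemma blockSwap_conj_sigma (n a b : ℕ) (ha : 2 * a + 1 < n) (hb : 2 * b + 1 < n)
    (hba : b ≤ a) :
    blockSwap n a b ha hb * sigma n b * (blockSwap n a b ha hb)⁻¹ = sigma n b := by
  apply conj_list_prod
  intro x hx
  rw [List.mem_map] at hx
  obtain ⟨t, ht, rfl⟩ := hx
  rw [List.mem_range] at ht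
  exact blockSwap_conj_tau_other n a b t ha hb (by omega) (by omega)

lemma blockSwap_conj_key (n a b : ℕ) (ha : 2 * a + 1 < n) (hb : 2 * b + 1 < n)
    (hba : b ≤ a) :
    blockSwap n a b ha hb * (sigma n b * tau n a) * (blockSwap n a b ha hb)⁻¹ =
      sigma n (b + 1) := by
  set g := blockSwap n a b ha hb
  have hx : g * (sigma n b * tau n a) * g⁻¹ = (g * sigma n b * g⁻¹) * (g * tau n a * g⁻¹) := by
    group
  rw [hx, blockSwap_conj_sigma n a b ha hb hba, blockSwap_conj_tau_self n a b ha hb,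
    ← sigma_succ]

lemma pascal_sum (f : ℕ → ℂ) (i : ℕ) :
    ∑ j ∈ Finset.range (i + 2), (((i + 1).choose j : ℕ) : ℂ) * f j =
      ∑ j ∈ Finset.range (i + 1), ((i.choose j : ℕ) : ℂ) * f j +
      ∑ j ∈ Finset.range (i + 1), ((i.choose j : ℕ) : ℂ) * f (j + 1) := by
  rw [Finset.sum_range_succ' (fun j => (((i + 1).choose j : ℕ) : ℂ) * f j) (i + 1)]
  simp only [Nat.choose_succ_succ, Nat.cast_add, add_mul, Finset.sum_add_distrib]
  have h1 : ∑ x ∈ Finset.range (i + 1), ((i.choose x.succ : ℕ) : ℂ) * f (x + 1) +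
      ((i + 1).choose 0 : ℕ) * f 0 =
      ∑ j ∈ Finset.range (i + 2), ((i.choose j : ℕ) : ℂ) * f j := by
    rw [Finset.sum_range_succ' (fun j => ((i.choose j : ℕ) : ℂ) * f j) (i + 1)]
    simp
  have h2 : ∑ j ∈ Finset.range (i + 2), ((i.choose j : ℕ) : ℂ) * f j =
      ∑ j ∈ Finset.range (i + 1), ((i.choose j : ℕ) : ℂ) * f j := by
    rw [Finset.sum_range_succ, Nat.choose_succ_self, Nat.cast_zero, zero_mul, add_zero]
  rw [add_assoc, h1, h2]
  ring

section
variable {n : ℕ} (V : FDRep ℂ (Equiv.Perm (Fin n)))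

/-- The product `∏_{t=a}^{a+i-1} (1 + ρ(τ_t))` in `End(V)`. -/
noncomputable def Pseg (a i : ℕ) : ↥V →ₗ[ℂ] ↥V :=
  ((List.range' a i).map (fun t => 1 + V.ρ (tau n t))).prod

lemma Pseg_succ (a i : ℕ) : Pseg V a (i + 1) = (1 + V.ρ (tau n a)) * Pseg V (a + 1) i := by
  unfold Pseg
  rw [List.range'_succ, List.map_cons, List.prod_cons]

lemma commute_ρ_Pseg (a i : ℕ) (g : Equiv.Perm (Fin n))
    (hg : ∀ t, a ≤ t → Commute g (tau n t)) :
    Commute (V.ρ g) (Pseg V a i) := by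
  apply Commute.list_prod_right
  intro x hx
  rw [List.mem_map] at hx
  obtain ⟨t, ht, rfl⟩ := hx
  rw [List.mem_range'_1] at ht
  exact (Commute.one_right _).add_right ((hg t ht.1).map V.ρ)

lemma trace_conj_Pseg (a i : ℕ) (g y : Equiv.Perm (Fin n))
    (hg : ∀ t, a ≤ t → Commute g (tau n t)) :
    LinearMap.trace ℂ V (Pseg V a i * V.ρ (g * y * g⁻¹)) =
      LinearMap.trace ℂ V (Pseg V a i * V.ρ y) := by
  have hc := commute_ρ_Pseg V a i g hg
  have hρ : V.ρ (g * y * g⁻¹) = V.ρ g * V.ρ y * V.ρ g⁻¹ := by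
    rw [map_mul, map_mul]
  have h1 : Pseg V a i * (V.ρ g * V.ρ y * V.ρ g⁻¹) =
      (V.ρ g * (Pseg V a i * V.ρ y)) * V.ρ g⁻¹ := by
    simp only [← mul_assoc]
    rw [hc.eq]
  rw [hρ, h1, LinearMap.trace_mul_comm, ← mul_assoc, ← map_mul, inv_mul_cancel,
    map_one, one_mul]

lemma trace_Pseg (i : ℕ) : ∀ a b : ℕ, b ≤ a → 2 * (a + i) ≤ n →
    LinearMap.trace ℂ V (Pseg V a i * V.ρ (sigma n b)) =
      ∑ j ∈ Finset.range (i + 1), (i.choose j : ℂ) * V.character (sigma n (b + j)) := by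
  induction i with
  | zero =>
    intro a b _ _
    simp [Pseg, FDRep.character]
  | succ i ih =>
    intro a b hba hn
    have ha : 2 * a + 1 < n := by omega
    have hb : 2 * b + 1 < n := by omega
    have hc := commute_ρ_Pseg V (a + 1) i (tau n a)
      (fun t ht => tau_commute n a t (by omega))
    have h2 : V.ρ (tau n a) * Pseg V (a + 1) i * V.ρ (sigma n b) =
        Pseg V (a + 1) i * V.ρ (sigma n b * tau n a) := by
      rw [hc.eq, mul_assoc, ← map_mul, ← (sigma_tau_commute n a b hba).eq]
    have key : LinearMap.trace ℂ V (Pseg V (a + 1) i * V.ρ (sigma n b * tau n a)) =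
        LinearMap.trace ℂ V (Pseg V (a + 1) i * V.ρ (sigma n (b + 1))) := by
      rw [← blockSwap_conj_key n a b ha hb hba]
      refine (trace_conj_Pseg V (a + 1) i _ _ ?_).symm
      intro t ht
      exact mul_inv_eq_iff_eq_mul.mp (blockSwap_conj_tau_other n a b t ha hb (by omega) (by omega))
    rw [Pseg_succ, add_mul, one_mul, add_mul, map_add, h2, key,
      ih (a + 1) b (by omega) (by omega), ih (a + 1) (b + 1) (by omega) (by omega)]
    have harith : ∀ j : ℕ, b + 1 + j = b + (j + 1) := fun j => by omega
    simp only [harith]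
    exact (pascal_sum (fun j => V.character (sigma n (b + j))) i).symm

lemma Pseg_sq (i : ℕ) : ∀ a : ℕ, Pseg V a i * Pseg V a i = (2 ^ i : ℂ) • Pseg V a i := by
  induction i with
  | zero => intro a; simp [Pseg]
  | succ i ih =>
    intro a
    have hc : Commute (V.ρ (tau n a)) (Pseg V (a + 1) i) :=
      commute_ρ_Pseg V (a + 1) i (tau n a) (fun t ht => tau_commute n a t (by omega))
    have hc1 : Commute (1 + V.ρ (tau n a)) (Pseg V (a + 1) i) :=
      (Commute.one_left _).add_left hc
    have hxx : V.ρ (tau n a) * V.ρ (tau n a) = 1 := by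
      rw [← map_mul, tau_sq, map_one]
    have hsq : (1 + V.ρ (tau n a)) * (1 + V.ρ (tau n a)) = (2 : ℂ) • (1 + V.ρ (tau n a)) := by
      rw [mul_add, mul_one, add_mul, one_mul, hxx, two_smul]
      abel
    rw [Pseg_succ]
    calc (1 + V.ρ (tau n a)) * Pseg V (a+1) i * ((1 + V.ρ (tau n a)) * Pseg V (a+1) i)
        = (1 + V.ρ (tau n a)) * ((Pseg V (a+1) i * (1 + V.ρ (tau n a))) * Pseg V (a+1) i) := by
          simp only [mul_assoc]
      _ = (1 + V.ρ (tau n a)) * (((1 + V.ρ (tau n a)) * Pseg V (a+1) i) * Pseg V (a+1) i) := by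
          rw [hc1.eq]
      _ = ((1 + V.ρ (tau n a)) * (1 + V.ρ (tau n a))) * (Pseg V (a+1) i * Pseg V (a+1) i) := by
          simp only [mul_assoc]
      _ = ((2 : ℂ) • (1 + V.ρ (tau n a))) * ((2 ^ i : ℂ) • Pseg V (a+1) i) := by
          rw [hsq, ih a.succ]
      _ = (2 ^ (i + 1) : ℂ) • ((1 + V.ρ (tau n a)) * Pseg V (a+1) i) := by
          rw [smul_mul_assoc, mul_smul_comm, smul_smul]
          ring_nf
end

/-- (Chan–Lam) For `2i ≤ n` and any (not necessarily irreducible) finite-dimensional complex representation of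
`S_n` with character `χ`, the quantity `∑_{j=0}^{i} C(i,j) · χ(σ_j)` is `2^i` times a
non-negative integer. -/
theorem chan_lam_general (n i : ℕ) (hi : 2 * i ≤ n)
    (V : FDRep ℂ (Equiv.Perm (Fin n))) :
    ∃ m : ℕ, ∑ j ∈ Finset.range (i + 1),
        (i.choose j : ℂ) * V.character (sigma n j) = 2 ^ i * (m : ℂ) := by
  set E := Pseg V 0 i with hE
  have htr : LinearMap.trace ℂ V E = ∑ j ∈ Finset.range (i + 1),
      (i.choose j : ℂ) * V.character (sigma n j) := by
    have h := trace_Pseg V i 0 0 le_rfl (by omega)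
    simp only [zero_add] at h
    have hσ0 : sigma n 0 = 1 := by simp [sigma]
    rw [hσ0, map_one, mul_one] at h
    exact h
  -- idempotent
  have h2 : (2 : ℂ) ^ i ≠ 0 := pow_ne_zero _ two_ne_zero
  set e := ((2 : ℂ) ^ i)⁻¹ • E with he
  have hee : e ∘ₗ e = e := by
    show e * e = e
    rw [he, smul_mul_assoc, mul_smul_comm, Pseg_sq V i 0, smul_smul, smul_smul]
    congr 1
    field_simp
  obtain ⟨p, hp⟩ := (LinearMap.isProj_iff_isIdempotentElem e).mpr hee
  have htr_e : LinearMap.trace ℂ V e = (Module.finrank ℂ p : ℂ) := hp.trace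
  refine ⟨Module.finrank ℂ p, ?_⟩
  rw [← htr]
  have hEe : E = (2 : ℂ) ^ i • e := by
    rw [he, smul_smul, mul_inv_cancel₀ h2, one_smul]
  rw [hEe, map_smul, htr_e, smul_eq_mul]
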